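/- Let Φ = (V, 𝒞) be a CNF formula and k ≥ 1. Let T ⊆ V be a sunflower consisting of positive variables with |T| ≥ OPT_{Φ,k} + 1, and let v ∈ T satisfy deg_Φ(v) ≤ deg_Φ(v') for all v' ∈ T. Then there exists Y ⊆ V ∖ {v} with |Y| ≤ k and val_Φ(Y) = OPT_{Φ,k}. -/

import Mathlib

/-- `Y` satisfies clause `C = (pos, neg)` iff `pos ∩ Y ≠ ∅` or `neg ⊈ Y`. -/
def ClauseSat {α : Type*} [DecidableEq α] (Y : Finset α) (C : Finset α × Finset α) : Prop :=
  (C.1 ∩ Y).Nonempty ∨ ¬ C.2 ⊆ Y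

instance {α : Type*} [DecidableEq α] (Y : Finset α) (C : Finset α × Finset α) :
    Decidable (ClauseSat Y C) := by
  unfold ClauseSat; infer_instance

/-- `val Φ Y`: number of clause occurrences (with multiplicity) satisfied by `Y`. -/
def cnfVal {α : Type*} [DecidableEq α] (𝒞 : Multiset (Finset α × Finset α))
    (Y : Finset α) : ℕ :=
  Multiset.countP (fun C => ClauseSat Y C) 𝒞

/-- `OPT_{Φ,k}`: maximum of `val` over solutions `Y ⊆ V` with `|Y| ≤ k`. -/
def cnfOPT {α : Type*} [DecidableEq α] (V : Finset α)
    (𝒞 : Multiset (Finset α × Finset α)) (k : ℕ) : ℕ :=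
  (V.powerset.filter (fun Y => Y.card ≤ k)).sup (cnfVal 𝒞)

/-- `N_Φ(v)`: the multiset of clause occurrences of `𝒞` containing `v`. -/
def cnfNbhd {α : Type*} [DecidableEq α] (𝒞 : Multiset (Finset α × Finset α))
    (v : α) : Multiset (Finset α × Finset α) :=
  𝒞.filter (fun C => v ∈ C.1 ∪ C.2)

/-- `deg_Φ(v)`: number of clause occurrences (with multiplicity) containing `v`. -/
def cnfDeg {α : Type*} [DecidableEq α] (𝒞 : Multiset (Finset α × Finset α)) (v : α) : ℕ :=
  Multiset.card (cnfNbhd 𝒞 v)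

/-- `T` is a sunflower: there is a core `K` (a multiset of clause occurrences)
with `N_Φ(v) ∩ N_Φ(v') = K` for all distinct `v, v' ∈ T`. -/
def cnfSunflower {α : Type*} [DecidableEq α] (𝒞 : Multiset (Finset α × Finset α))
    (T : Finset α) : Prop :=
  ∃ K : Multiset (Finset α × Finset α),
    ∀ v ∈ T, ∀ v' ∈ T, v ≠ v' → cnfNbhd 𝒞 v ∩ cnfNbhd 𝒞 v' = K

private lemma filter_le_filter_of_imp {α : Type*} [DecidableEq α] (s : Multiset α) (p q : α → Prop)
    [DecidablePred p] [DecidablePred q] (h : ∀ a ∈ s, p a → q a) :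
    s.filter p ≤ s.filter q := by
  rw [Multiset.le_iff_count]
  intro a
  rw [Multiset.count_filter, Multiset.count_filter]
  by_cases hp : p a
  · simp only [if_pos hp]
    by_cases ha : a ∈ s
    · rw [if_pos (h a ha hp)]
    · simp [Multiset.count_eq_zero_of_notMem ha]
  · simp [hp]

private lemma card_finset_sum {α β : Type*} (s : Finset β) (f : β → Multiset α) :
    Multiset.card (∑ b ∈ s, f b) = ∑ b ∈ s, Multiset.card (f b) := by
  classical
  induction s using Finset.induction with
  | empty => simp
  | insert _ _ h ih =>
    rw [Finset.sum_insert h, Finset.sum_insert h, Multiset.card_add, ih]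

/-- deleting the minimum-degree variable of a large sunflower of
positive variables does not change the optimum. -/
theorem stmt_12 {α : Type*} [DecidableEq α] (V : Finset α)
    (𝒞 : Multiset (Finset α × Finset α))
    (h𝒞 : ∀ C ∈ 𝒞, C.1 ⊆ V ∧ C.2 ⊆ V)
    (k : ℕ) (hk : 1 ≤ k)
    (T : Finset α) (hTV : T ⊆ V)
    (hTpos : ∀ u ∈ T, ∀ C ∈ 𝒞, u ∉ C.2)
    (hTsun : cnfSunflower 𝒞 T)
    (hTcard : T.card ≥ cnfOPT V 𝒞 k + 1)
    (v : α) (hvT : v ∈ T) (hvmin : ∀ v' ∈ T, cnfDeg 𝒞 v ≤ cnfDeg 𝒞 v') :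
    ∃ Y ⊆ V \ {v}, Y.card ≤ k ∧ cnfVal 𝒞 Y = cnfOPT V 𝒞 k := by
  classical
  obtain ⟨K, hK⟩ := hTsun
  -- an optimal solution Y
  have hne : (V.powerset.filter (fun Y => Y.card ≤ k)).Nonempty := ⟨∅, by simp⟩
  obtain ⟨Y, hYmem, hYopt⟩ := Finset.exists_mem_eq_sup _ hne (cnfVal 𝒞)
  have hOPT : cnfOPT V 𝒞 k = cnfVal 𝒞 Y := hYopt
  rw [Finset.mem_filter, Finset.mem_powerset] at hYmem
  obtain ⟨hYV, hYk⟩ := hYmem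
  by_cases hvY : v ∉ Y
  · exact ⟨Y, Finset.subset_sdiff.mpr ⟨hYV, by simp [hvY]⟩, hYk, hOPT.symm⟩
  push_neg at hvY
  by_cases h0 : cnfOPT V 𝒞 k = 0
  · refine ⟨∅, Finset.empty_subset _, by simp [hk], ?_⟩
    have h1 : cnfVal 𝒞 ∅ ≤ cnfOPT V 𝒞 k :=
      Finset.le_sup (by simp : ∅ ∈ V.powerset.filter (fun Y => Y.card ≤ k))
    omega
  -- counting step: some u ∈ T has all its satisfied clauses in the core K
  have hvalcard : cnfVal 𝒞 Y = Multiset.card (𝒞.filter (ClauseSat Y)) :=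
    Multiset.countP_eq_card_filter _ _
  have hA : ∃ u ∈ T, (cnfNbhd 𝒞 u).filter (ClauseSat Y) ≤ K := by
    by_contra hcon
    push_neg at hcon
    have hsum : (∑ u ∈ T, ((cnfNbhd 𝒞 u).filter (ClauseSat Y) - K)) ≤
        𝒞.filter (ClauseSat Y) := by
      rw [Multiset.le_iff_count]
      intro C
      rw [Multiset.count_sum']
      by_cases hz : ∃ u₀ ∈ T,
          Multiset.count C ((cnfNbhd 𝒞 u₀).filter (ClauseSat Y) - K) ≠ 0
      · obtain ⟨u₀, hu₀T, hu₀⟩ := hz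
        have hside : ∀ u ∈ T, u ≠ u₀ →
            Multiset.count C ((cnfNbhd 𝒞 u).filter (ClauseSat Y) - K) = 0 := by
          intro u huT hneq
          by_contra hcu
          have hKeq := hK u huT u₀ hu₀T hneq
          have h1 : Multiset.count C ((cnfNbhd 𝒞 u).filter (ClauseSat Y)) ≤
              Multiset.count C (cnfNbhd 𝒞 u) :=
            Multiset.count_le_of_le C (Multiset.filter_le _ _)
          have h2 : Multiset.count C ((cnfNbhd 𝒞 u₀).filter (ClauseSat Y)) ≤
              Multiset.count C (cnfNbhd 𝒞 u₀) :=
            Multiset.count_le_of_le C (Multiset.filter_le _ _)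
          have h3 : Multiset.count C K =
              min (Multiset.count C (cnfNbhd 𝒞 u)) (Multiset.count C (cnfNbhd 𝒞 u₀)) := by
            rw [← hKeq, Multiset.count_inter]
          rw [Multiset.count_sub] at hcu hu₀
          omega
        rw [Finset.sum_eq_single_of_mem u₀ hu₀T hside]
        calc Multiset.count C ((cnfNbhd 𝒞 u₀).filter (ClauseSat Y) - K)
            ≤ Multiset.count C ((cnfNbhd 𝒞 u₀).filter (ClauseSat Y)) :=
              Multiset.count_le_of_le C tsub_le_self
          _ ≤ Multiset.count C (𝒞.filter (ClauseSat Y)) :=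
              Multiset.count_le_of_le C
                (Multiset.filter_le_filter _ (Multiset.filter_le _ 𝒞))
      · push_neg at hz
        rw [Finset.sum_eq_zero hz]
        exact Nat.zero_le _
    have hone : ∀ u ∈ T, 1 ≤ Multiset.card ((cnfNbhd 𝒞 u).filter (ClauseSat Y) - K) := by
      intro u huT
      rcases Nat.eq_zero_or_pos (Multiset.card ((cnfNbhd 𝒞 u).filter (ClauseSat Y) - K))
        with h | h
      · exact absurd (tsub_eq_zero_iff_le.mp (Multiset.card_eq_zero.mp h)) (hcon u huT)
      · exact h
    have hTle : T.card ≤ Multiset.card (𝒞.filter (ClauseSat Y)) := by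
      calc T.card = ∑ _u ∈ T, 1 := by simp
        _ ≤ ∑ u ∈ T, Multiset.card ((cnfNbhd 𝒞 u).filter (ClauseSat Y) - K) :=
            Finset.sum_le_sum hone
        _ = Multiset.card (∑ u ∈ T, ((cnfNbhd 𝒞 u).filter (ClauseSat Y) - K)) :=
            (card_finset_sum _ _).symm
        _ ≤ _ := Multiset.card_le_card hsum
    rw [← hvalcard, ← hOPT] at hTle
    omega
  obtain ⟨u, huT, hAu⟩ := hA
  -- choose a swap partner w ≠ v with the loss/gain cardinality bound
  obtain ⟨w, hwT, hwv, hLG⟩ : ∃ w, w ∈ T ∧ w ≠ v ∧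
      Multiset.card ((cnfNbhd 𝒞 v).filter (fun C => ClauseSat Y C ∧ w ∉ C.1 ∪ C.2)) ≤
      Multiset.card ((cnfNbhd 𝒞 w).filter (fun C => ¬ ClauseSat Y C)) := by
    by_cases huv : u = v
    · have h2T : 1 < T.card := by omega
      obtain ⟨w, hwT, hwv⟩ := Finset.exists_mem_ne h2T v
      refine ⟨w, hwT, hwv, ?_⟩
      have hL0 : (cnfNbhd 𝒞 v).filter (fun C => ClauseSat Y C ∧ w ∉ C.1 ∪ C.2) = 0 := by
        apply Multiset.eq_zero_of_forall_notMem
        intro C hC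
        have hC' := Multiset.mem_filter.mp hC
        have hle : (cnfNbhd 𝒞 v).filter (fun C => ClauseSat Y C ∧ w ∉ C.1 ∪ C.2) ≤
            (cnfNbhd 𝒞 v).filter (ClauseSat Y) :=
          filter_le_filter_of_imp _ _ _ (fun a _ h => h.1)
        have hCK : C ∈ K := by
          subst huv
          exact Multiset.mem_of_le hAu (Multiset.mem_of_le hle hC)
        have hKvw := hK v hvT w hwT (Ne.symm hwv)
        rw [← hKvw] at hCK
        have hCw : C ∈ cnfNbhd 𝒞 w := (Multiset.mem_inter.mp hCK).2
        exact hC'.2.2 ((Multiset.mem_filter.mp hCw).2)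
      rw [hL0]
      simp
    · refine ⟨u, huT, huv, ?_⟩
      have hKvu := hK v hvT u huT (fun h => huv h.symm)
      have hdeg := hvmin u huT
      have hKNv : K ≤ cnfNbhd 𝒞 v := hKvu ▸ Multiset.inter_le_left
      have hL'le : Multiset.card ((cnfNbhd 𝒞 v).filter
            (fun C => ClauseSat Y C ∧ u ∉ C.1 ∪ C.2)) ≤
          Multiset.card ((cnfNbhd 𝒞 v).filter (fun C => u ∉ C.1 ∪ C.2)) :=
        Multiset.card_le_card (filter_le_filter_of_imp _ _ _ (fun a _ h => h.2))
      -- filter (u ∈ ·) (N v) = K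
      have hfil : (cnfNbhd 𝒞 v).filter (fun C => u ∈ C.1 ∪ C.2) = K := by
        rw [← hKvu]
        apply Multiset.ext.mpr
        intro C
        simp only [cnfNbhd, Multiset.count_inter, Multiset.count_filter]
        split_ifs <;> omega
      have hsplit : Multiset.card ((cnfNbhd 𝒞 v).filter (fun C => u ∈ C.1 ∪ C.2)) +
          Multiset.card ((cnfNbhd 𝒞 v).filter (fun C => u ∉ C.1 ∪ C.2)) = cnfDeg 𝒞 v := by
        rw [← Multiset.card_add, Multiset.filter_add_not]
        rfl
      have hsplit2 : Multiset.card ((cnfNbhd 𝒞 u).filter (ClauseSat Y)) +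
          Multiset.card ((cnfNbhd 𝒞 u).filter (fun C => ¬ ClauseSat Y C)) = cnfDeg 𝒞 u := by
        rw [← Multiset.card_add, Multiset.filter_add_not]
        rfl
      have hAK : Multiset.card ((cnfNbhd 𝒞 u).filter (ClauseSat Y)) ≤ Multiset.card K :=
        Multiset.card_le_card hAu
      have hKv : Multiset.card K ≤ cnfDeg 𝒞 v := Multiset.card_le_card hKNv
      rw [hfil] at hsplit
      omega
  -- the swapped solution
  set Y' : Finset α := insert w (Y.erase v) with hY'def
  have hwY' : w ∈ Y' := Finset.mem_insert_self _ _
  have hY'V : Y' ⊆ V := by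
    intro x hx
    rcases Finset.mem_insert.mp hx with h | h
    · exact hTV (h ▸ hwT)
    · exact hYV (Finset.mem_of_mem_erase h)
  have hY'k : Y'.card ≤ k := by
    have h1 : Y'.card ≤ (Y.erase v).card + 1 := Finset.card_insert_le _ _
    have h2 : (Y.erase v).card = Y.card - 1 := Finset.card_erase_of_mem hvY
    have h3 : 1 ≤ Y.card := Finset.card_pos.mpr ⟨v, hvY⟩
    omega
  have hY'sub : Y' ⊆ V \ {v} := by
    intro x hx
    rw [Finset.mem_sdiff, Finset.mem_singleton]
    refine ⟨hY'V hx, ?_⟩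
    rcases Finset.mem_insert.mp hx with h | h
    · exact fun hxv => hwv (hxv ▸ h.symm ▸ rfl)
    · exact Finset.ne_of_mem_erase h
  -- key implication: clauses satisfied by Y but not by Y'
  have himp1 : ∀ C ∈ 𝒞, (¬ ClauseSat Y' C ∧ ClauseSat Y C) →
      ((ClauseSat Y C ∧ w ∉ C.1 ∪ C.2) ∧ v ∈ C.1 ∪ C.2) := by
    intro C hC𝒞 ⟨hns, hs⟩
    rw [ClauseSat, not_or, not_not] at hns
    obtain ⟨hns1, hns2⟩ := hns
    have hwC : w ∉ C.1 ∪ C.2 := by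
      intro hw
      rcases Finset.mem_union.mp hw with hw1 | hw2
      · exact hns1 ⟨w, Finset.mem_inter.mpr ⟨hw1, hwY'⟩⟩
      · exact hTpos w hwT C hC𝒞 hw2
    have hC2Y : C.2 ⊆ Y := by
      intro x hx
      have hx' := hns2 hx
      rcases Finset.mem_insert.mp hx' with h | h
      · exact absurd (h ▸ hx) (hTpos w hwT C hC𝒞)
      · exact Finset.mem_of_mem_erase h
    rcases hs with h | h
    · obtain ⟨x, hx⟩ := h
      obtain ⟨hx1, hx2⟩ := Finset.mem_inter.mp hx
      have hxv : x = v := by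
        by_contra hxv
        exact hns1 ⟨x, Finset.mem_inter.mpr
          ⟨hx1, Finset.mem_insert_of_mem (Finset.mem_erase.mpr ⟨hxv, hx2⟩)⟩⟩
      exact ⟨⟨Or.inl ⟨x, hx⟩, hwC⟩, Finset.mem_union_left _ (hxv ▸ hx1)⟩
    · exact absurd hC2Y h
  have himp2 : ∀ C ∈ 𝒞, (¬ ClauseSat Y C ∧ w ∈ C.1 ∪ C.2) →
      (ClauseSat Y' C ∧ ¬ ClauseSat Y C) := by
    intro C hC𝒞 ⟨hns, hw⟩
    refine ⟨?_, hns⟩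
    rcases Finset.mem_union.mp hw with hw1 | hw2
    · exact Or.inl ⟨w, Finset.mem_inter.mpr ⟨hw1, hwY'⟩⟩
    · exact absurd hw2 (hTpos w hwT C hC𝒞)
  -- value comparison
  have hval_ge : cnfVal 𝒞 Y ≤ cnfVal 𝒞 Y' := by
    have e1 : cnfVal 𝒞 Y = Multiset.card ((𝒞.filter (ClauseSat Y)).filter (ClauseSat Y')) +
        Multiset.card ((𝒞.filter (ClauseSat Y)).filter (fun C => ¬ ClauseSat Y' C)) := by
      rw [hvalcard, ← Multiset.card_add, Multiset.filter_add_not]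
    have e2 : cnfVal 𝒞 Y' = Multiset.card ((𝒞.filter (ClauseSat Y)).filter (ClauseSat Y')) +
        Multiset.card ((𝒞.filter (fun C => ¬ ClauseSat Y C)).filter (ClauseSat Y')) := by
      rw [show cnfVal 𝒞 Y' = Multiset.card (𝒞.filter (ClauseSat Y')) from
        Multiset.countP_eq_card_filter _ _]
      conv_lhs => rw [← Multiset.filter_add_not (ClauseSat Y) 𝒞]
      rw [Multiset.filter_add, Multiset.card_add]
    rw [e1, e2]
    have hL : Multiset.card ((𝒞.filter (ClauseSat Y)).filter (fun C => ¬ ClauseSat Y' C)) ≤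
        Multiset.card ((𝒞.filter (fun C => ¬ ClauseSat Y C)).filter (ClauseSat Y')) := by
      calc Multiset.card ((𝒞.filter (ClauseSat Y)).filter (fun C => ¬ ClauseSat Y' C))
          = Multiset.card (𝒞.filter (fun C => ¬ ClauseSat Y' C ∧ ClauseSat Y C)) := by
            rw [Multiset.filter_filter]
        _ ≤ Multiset.card (𝒞.filter
              (fun C => (ClauseSat Y C ∧ w ∉ C.1 ∪ C.2) ∧ v ∈ C.1 ∪ C.2)) :=
            Multiset.card_le_card (filter_le_filter_of_imp _ _ _ himp1)
        _ = Multiset.card ((cnfNbhd 𝒞 v).filter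
              (fun C => ClauseSat Y C ∧ w ∉ C.1 ∪ C.2)) := by
            rw [cnfNbhd, Multiset.filter_filter]
        _ ≤ Multiset.card ((cnfNbhd 𝒞 w).filter (fun C => ¬ ClauseSat Y C)) := hLG
        _ = Multiset.card (𝒞.filter (fun C => ¬ ClauseSat Y C ∧ w ∈ C.1 ∪ C.2)) := by
            rw [cnfNbhd, Multiset.filter_filter]
        _ ≤ Multiset.card (𝒞.filter (fun C => ClauseSat Y' C ∧ ¬ ClauseSat Y C)) :=
            Multiset.card_le_card (filter_le_filter_of_imp _ _ _ himp2)
        _ = Multiset.card ((𝒞.filter (fun C => ¬ ClauseSat Y C)).filter (ClauseSat Y')) := by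
            rw [Multiset.filter_filter]
    omega
  have hval_le : cnfVal 𝒞 Y' ≤ cnfOPT V 𝒞 k :=
    Finset.le_sup (Finset.mem_filter.mpr ⟨Finset.mem_powerset.mpr hY'V, hY'k⟩)
  exact ⟨Y', hY'sub, hY'k, le_antisymm hval_le (le_trans (le_of_eq hOPT) hval_ge)⟩
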